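/- Let n ≥ 5. Define a Type 1 set as {j₁, j₁+2} ∪ {j₂, j₂+1} with 1 ≤ j₁ < n-3, j₁+3 ≤ j₂, j₂ < n. Then the number of Type 1 sets is C(n-3, 2). -/
import Mathlib


/-- For `n ≥ 5`, the number of Type 1 sets `{j₁, j₁+2} ∪ {j₂, j₂+1}` with
`1 ≤ j₁ < n-3`, `j₁+3 ≤ j₂`, `j₂ < n` is `C(n-3, 2)`. -/
theorem stmt_4 (n : ℕ) (hn : 5 ≤ n) :
    {s : Finset ℕ | ∃ j₁ j₂ : ℕ, 1 ≤ j₁ ∧ j₁ < n - 3 ∧ j₁ + 3 ≤ j₂ ∧ j₂ < n ∧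
      s = {j₁, j₁ + 2, j₂, j₂ + 1}}.ncard = (n - 3).choose 2 := by
  classical
  set m := n - 3 with hm
  have hm2 : 2 ≤ m := by omega
  set T : Finset (ℕ × ℕ) :=
    (Finset.Ico 1 m).biUnion (fun a => (Finset.Ico (a+3) n).image (fun b => (a, b))) with hT
  have hmemT : ∀ p : ℕ × ℕ, p ∈ T ↔ 1 ≤ p.1 ∧ p.1 < m ∧ p.1 + 3 ≤ p.2 ∧ p.2 < n := by
    intro ⟨a, b⟩
    simp only [hT, Finset.mem_biUnion, Finset.mem_image, Finset.mem_Ico, Prod.mk.injEq]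
    constructor
    · rintro ⟨x, ⟨h1, h2⟩, y, ⟨h3, h4⟩, rfl, rfl⟩
      exact ⟨h1, h2, h3, h4⟩
    · rintro ⟨h1, h2, h3, h4⟩
      exact ⟨a, ⟨h1, h2⟩, b, ⟨h3, h4⟩, rfl, rfl⟩
  have hset : {s : Finset ℕ | ∃ j₁ j₂ : ℕ, 1 ≤ j₁ ∧ j₁ < n - 3 ∧ j₁ + 3 ≤ j₂ ∧ j₂ < n ∧
      s = {j₁, j₁ + 2, j₂, j₂ + 1}} =
      (fun p : ℕ × ℕ => ({p.1, p.1 + 2, p.2, p.2 + 1} : Finset ℕ)) '' ↑T := by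
    ext s
    simp only [Set.mem_image, Set.mem_setOf_eq, Finset.mem_coe, hmemT, ← hm]
    constructor
    · rintro ⟨a, b, h1, h2, h3, h4, rfl⟩
      exact ⟨(a, b), ⟨h1, h2, h3, h4⟩, rfl⟩
    · rintro ⟨⟨a, b⟩, ⟨h1, h2, h3, h4⟩, rfl⟩
      exact ⟨a, b, h1, h2, h3, h4, rfl⟩
  have hinj : Set.InjOn (fun p : ℕ × ℕ => ({p.1, p.1 + 2, p.2, p.2 + 1} : Finset ℕ)) ↑T := by
    rintro ⟨a, b⟩ hab ⟨c, d⟩ hcd h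
    rw [Finset.mem_coe, hmemT] at hab hcd
    simp only at h
    have h1 : a ∈ ({c, c + 2, d, d + 1} : Finset ℕ) := by rw [← h]; simp
    have h2 : c ∈ ({a, a + 2, b, b + 1} : Finset ℕ) := by rw [h]; simp
    have h3 : b + 1 ∈ ({c, c + 2, d, d + 1} : Finset ℕ) := by rw [← h]; simp
    have h4 : d + 1 ∈ ({a, a + 2, b, b + 1} : Finset ℕ) := by rw [h]; simp
    simp only [Finset.mem_insert, Finset.mem_singleton] at h1 h2 h3 h4
    obtain ⟨ha1, ha2, ha3, ha4⟩ := hab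
    obtain ⟨hc1, hc2, hc3, hc4⟩ := hcd
    have : a = c ∧ b = d := by omega
    simp [this.1, this.2]
  rw [hset, Set.ncard_image_of_injOn hinj, Set.ncard_coe_finset]
  have hdisj : ∀ a ∈ Finset.Ico 1 m, ∀ a' ∈ Finset.Ico 1 m, a ≠ a' →
      Disjoint ((Finset.Ico (a+3) n).image (fun b => (a, b)))
        ((Finset.Ico (a'+3) n).image (fun b => (a', b))) := by
    intro a _ a' _ hne
    simp only [Finset.disjoint_left, Finset.mem_image]
    rintro p ⟨x, _, rfl⟩ ⟨y, _, h⟩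
    exact hne (by simpa using (Prod.mk.injEq .. ▸ h).1.symm)
  rw [hT, Finset.card_biUnion hdisj]
  have hcard : ∀ a ∈ Finset.Ico 1 m,
      ((Finset.Ico (a+3) n).image (fun b => (a, b))).card = m - 1 - (a - 1) := by
    intro a ha
    rw [Finset.card_image_of_injective _ (fun x y hxy => (Prod.mk.injEq .. ▸ hxy).2),
      Nat.card_Ico]
    simp only [Finset.mem_Ico] at ha
    omega
  rw [Finset.sum_congr rfl hcard, Finset.sum_Ico_eq_sum_range]
  have : ∀ i ∈ Finset.range (m - 1), m - 1 - (1 + i - 1) = (m - 1) - 1 - i + 1 := by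
    intro i hi
    simp only [Finset.mem_range] at hi
    omega
  rw [Finset.sum_congr rfl this, Finset.sum_range_reflect (fun j => j + 1) (m - 1)]
  have hshift : ∑ j ∈ Finset.range (m - 1), (j + 1) = ∑ j ∈ Finset.range m, j := by
    have : m = (m - 1) + 1 := by omega
    rw [this, Finset.sum_range_succ']
    simp
  rw [hshift, Finset.sum_range_id, Nat.choose_two_right]
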